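/- Let y_1, ..., y_m be nonzero vectors in R^2 lying in an open half-plane, with signed angles θ(y_1),...,θ(y_m) relative to a reference direction, and suppose the indices i* = argmax_i θ(y_i) and j* = argmin_i θ(y_i) are unique. Then cone({y_{i*}, y_{j*}}) = cone({y_1,...,y_m}), and no single vector y_l satisfies cone({y_l}) = cone({y_1,...,y_m}) unless m-many vectors are all positive multiples of each other. Hence {i*, j*} solves the minimum conical hull problem on the 2D plane. -/

import Mathlib

open Real

/-- The conical hull of the planar vectors `y i` for `i` in the finite set `S`. -/
def coneOf {m : ℕ} (S : Finset (Fin m)) (y : Fin m → (Fin 2 → ℝ)) :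
    Set (Fin 2 → ℝ) :=
  {x | ∃ a : Fin m → ℝ, (∀ i, 0 ≤ a i) ∧ x = ∑ i ∈ S, a i • y i}

/-- The signed angle of a planar vector `v` relative to the unit direction `u`
(valid on the open half-plane `⟪v,u⟫ > 0`), taking values in `(-π/2, π/2)`. -/
noncomputable def signedAngle (u v : Fin 2 → ℝ) : ℝ :=
  arctan ((v 0 * (-u 1) + v 1 * u 0) / (v 0 * u 0 + v 1 * u 1))

lemma signedAngle_lt_iff (u v w : Fin 2 → ℝ)
    (hv : 0 < v 0 * u 0 + v 1 * u 1) (hw : 0 < w 0 * u 0 + w 1 * u 1) :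
    signedAngle u v < signedAngle u w ↔
      (v 0 * (-u 1) + v 1 * u 0) * (w 0 * u 0 + w 1 * u 1) <
        (w 0 * (-u 1) + w 1 * u 0) * (v 0 * u 0 + v 1 * u 1) := by
  rw [signedAngle, signedAngle, Real.arctan_strictMono.lt_iff_lt,
    div_lt_div_iff₀ hv hw]

lemma coord_eq (u : Fin 2 → ℝ) (hu : u 0 ^ 2 + u 1 ^ 2 = 1)
    (v w z : Fin 2 → ℝ) (a b : ℝ)
    (hP : z 0 * u 0 + z 1 * u 1 =
      a * (v 0 * u 0 + v 1 * u 1) + b * (w 0 * u 0 + w 1 * u 1))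
    (hQ : z 0 * (-u 1) + z 1 * u 0 =
      a * (v 0 * (-u 1) + v 1 * u 0) + b * (w 0 * (-u 1) + w 1 * u 0)) :
    z = a • v + b • w := by
  funext j
  fin_cases j
  · show z 0 = a * v 0 + b * w 0
    linear_combination u 0 * hP - u 1 * hQ - (z 0 - a * v 0 - b * w 0) * hu
  · show z 1 = a * v 1 + b * w 1
    linear_combination u 1 * hP + u 0 * hQ - (z 1 - a * v 1 - b * w 1) * hu

/-- The two extreme-angle vectors generate the whole conical hull, and (since the
vectors are not all parallel) no single vector does; hence `{i*, j*}` solves the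
minimum conical hull problem on the 2D plane. -/
theorem two_extreme_angles_solve_minimum_conical_hull
    {m : ℕ} (u : Fin 2 → ℝ) (hu : u 0 ^ 2 + u 1 ^ 2 = 1)
    (y : Fin m → (Fin 2 → ℝ)) (hy : ∀ i, y i ≠ 0)
    (hyhalf : ∀ i, 0 < (y i) 0 * u 0 + (y i) 1 * u 1)
    (istar jstar : Fin m)
    (hlt : signedAngle u (y jstar) < signedAngle u (y istar))
    (hmax : ∀ i, i ≠ istar → signedAngle u (y i) < signedAngle u (y istar))
    (hmin : ∀ i, i ≠ jstar → signedAngle u (y jstar) < signedAngle u (y i)) :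
    coneOf {istar, jstar} y = coneOf Finset.univ y ∧
      ∀ l : Fin m, coneOf {l} y ≠ coneOf Finset.univ y := by
  have hIJ : istar ≠ jstar := by
    intro h; rw [h] at hlt; exact lt_irrefl _ hlt
  set P : Fin m → ℝ := fun i => (y i) 0 * u 0 + (y i) 1 * u 1 with hPdef
  set Q : Fin m → ℝ := fun i => (y i) 0 * (-u 1) + (y i) 1 * u 0 with hQdef
  have hPpos : ∀ i, 0 < P i := hyhalf
  have key : ∀ i j : Fin m, signedAngle u (y i) < signedAngle u (y j) →
      Q i * P j < Q j * P i := fun i j h =>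
    (signedAngle_lt_iff u (y i) (y j) (hPpos i) (hPpos j)).1 h
  -- every y i is a nonneg combination of y istar and y jstar
  have main : ∀ i : Fin m, ∃ a b : ℝ, 0 ≤ a ∧ 0 ≤ b ∧
      y i = a • y istar + b • y jstar := by
    intro i
    have hdet : P istar * Q jstar - Q istar * P jstar < 0 := by
      have := key jstar istar hlt
      nlinarith
    have hdetne : P istar * Q jstar - Q istar * P jstar ≠ 0 := ne_of_lt hdet
    have hle1 : Q jstar * P i ≤ Q i * P jstar := by
      rcases eq_or_ne i jstar with h | h
      · rw [h]
      · exact le_of_lt (key jstar i (hmin i h))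
    have hle2 : Q i * P istar ≤ Q istar * P i := by
      rcases eq_or_ne i istar with h | h
      · rw [h]
      · exact le_of_lt (key i istar (hmax i h))
    refine ⟨(P i * Q jstar - Q i * P jstar) / (P istar * Q jstar - Q istar * P jstar),
      (Q i * P istar - P i * Q istar) / (P istar * Q jstar - Q istar * P jstar),
      ?_, ?_, ?_⟩
    · rw [div_nonneg_iff]; right; exact ⟨by nlinarith, le_of_lt hdet⟩
    · rw [div_nonneg_iff]; right; exact ⟨by nlinarith, le_of_lt hdet⟩
    · apply coord_eq u hu _ _ _ _ _
      · show P i = _ * P istar + _ * P jstar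
        rw [div_mul_eq_mul_div, div_mul_eq_mul_div, ← add_div, eq_div_iff hdetne]
        ring
      · show Q i = _ * Q istar + _ * Q jstar
        rw [div_mul_eq_mul_div, div_mul_eq_mul_div, ← add_div, eq_div_iff hdetne]
        ring
  -- scale invariance of signedAngle
  have hscale : ∀ (s : ℝ) (i : Fin m), 0 < s →
      signedAngle u (s • y i) = signedAngle u (y i) := by
    intro s i hs
    unfold signedAngle
    congr 1
    simp only [Pi.smul_apply, smul_eq_mul]
    rw [show s * (y i) 0 * (-u 1) + s * (y i) 1 * u 0
        = s * ((y i) 0 * (-u 1) + (y i) 1 * u 0) by ring,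
      show s * (y i) 0 * u 0 + s * (y i) 1 * u 1
        = s * ((y i) 0 * u 0 + (y i) 1 * u 1) by ring,
      mul_div_mul_left _ _ (ne_of_gt hs)]
  have hmem : ∀ k : Fin m, y k ∈ coneOf Finset.univ y := by
    intro k
    refine ⟨fun i => if i = k then 1 else 0, ?_, ?_⟩
    · intro i; dsimp only; split <;> norm_num
    · rw [eq_comm]
      simp [ite_smul]
  constructor
  · apply Set.eq_of_subset_of_subset
    · rintro x ⟨a, ha, rfl⟩
      refine ⟨fun i => if i ∈ ({istar, jstar} : Finset (Fin m)) then a i else 0, ?_, ?_⟩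
      · intro i; dsimp only; split <;> [exact ha i; exact le_refl 0]
      · rw [← Finset.sum_subset (Finset.subset_univ {istar, jstar})
          (by intro x _ hx; simp [hx])]
        exact Finset.sum_congr rfl (by intro i hi; simp [hi])
    · rintro x ⟨a, ha, rfl⟩
      choose c d hc hd hcd using main
      refine ⟨fun k => if k = istar then ∑ i, a i * c i
        else if k = jstar then ∑ i, a i * d i else 0, ?_, ?_⟩
      · intro k
        dsimp only
        split
        · exact Finset.sum_nonneg fun i _ => mul_nonneg (ha i) (hc i)
        split
        · exact Finset.sum_nonneg fun i _ => mul_nonneg (ha i) (hd i)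
        · exact le_refl 0
      · rw [Finset.sum_pair hIJ]
        simp only [if_pos, if_neg (Ne.symm hIJ), ite_true, ite_false]
        rw [Finset.sum_smul, Finset.sum_smul, ← Finset.sum_add_distrib]
        refine Finset.sum_congr rfl fun i _ => ?_
        rw [hcd i, smul_add, smul_smul, smul_smul]
  · intro l hcone
    have hI : y istar ∈ coneOf {l} y := by rw [hcone]; exact hmem istar
    have hJ : y jstar ∈ coneOf {l} y := by rw [hcone]; exact hmem jstar
    obtain ⟨a, ha, haeq⟩ := hI
    obtain ⟨b, hb, hbeq⟩ := hJ
    rw [Finset.sum_singleton] at haeq hbeq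
    have hapos : 0 < a l := by
      rcases lt_or_eq_of_le (ha l) with h | h
      · exact h
      · exfalso; apply hy istar; rw [haeq, ← h, zero_smul]
    have hbpos : 0 < b l := by
      rcases lt_or_eq_of_le (hb l) with h | h
      · exact h
      · exfalso; apply hy jstar; rw [hbeq, ← h, zero_smul]
    have e1 : signedAngle u (y istar) = signedAngle u (y l) := by
      rw [haeq]; exact hscale (a l) l hapos
    have e2 : signedAngle u (y jstar) = signedAngle u (y l) := by
      rw [hbeq]; exact hscale (b l) l hbpos
    rw [e1, e2] at hlt
    exact lt_irrefl _ hlt
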